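/- arXiv:1302.5073 — 3 statements merged into one kernel-verified Lean document; each statement's English description precedes it below -/
import Mathlib

section
/- For every x in the open unit ball of ℝ^n (n ≥ 2) and every 0 < α < 1, the surface integral ∫_{|y|=1} |x−y|^{α−n} dσ(y) is bounded by C (1−|x|)^{α−1}, where C depends only on n and α. -/
open MeasureTheory Metric Module ENNReal
open scoped RealInnerProductSpace Pointwise NNReal
noncomputable section

lemma kball_lt_top (m : ℕ) :
    μH[(m:ℝ)] (closedBall (0 : EuclideanSpace ℝ (Fin m)) 1) < ∞ := by
  set φ : (Fin m → ℝ) → EuclideanSpace ℝ (Fin m) := ⇑(WithLp.equiv 2 (Fin m → ℝ)).symm with hφ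
  obtain ⟨K, hLip⟩ : ∃ K, LipschitzWith K φ :=
    ⟨_, (PiLp.antilipschitzWith_ofLp 2 (fun _ : Fin m => ℝ)).to_rightInverse (fun x => rfl)⟩
  have hsub : closedBall (0 : EuclideanSpace ℝ (Fin m)) 1 ⊆
      φ '' (closedBall (0 : Fin m → ℝ) 1) := by
    intro x hx
    refine ⟨WithLp.equiv 2 (Fin m → ℝ) x, ?_, rfl⟩
    simp only [mem_closedBall] at hx ⊢
    calc dist (WithLp.equiv 2 (Fin m → ℝ) x) 0
        = dist (WithLp.equiv 2 (Fin m → ℝ) x) (WithLp.equiv 2 (Fin m → ℝ) 0) := by simp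
      _ ≤ 1 * dist x 0 := (PiLp.lipschitzWith_ofLp 2 (fun _ : Fin m => ℝ)).dist_le_mul x 0
      _ ≤ 1 := by simpa using hx
  have h1 : μH[(m:ℝ)] (closedBall (0 : EuclideanSpace ℝ (Fin m)) 1) ≤
      (K : ℝ≥0∞) ^ (m:ℝ) * μH[(m:ℝ)] (closedBall (0 : Fin m → ℝ) 1) :=
    le_trans (measure_mono hsub) (hLip.hausdorffMeasure_image_le (by positivity) _)
  have h2 : μH[(m:ℝ)] (closedBall (0 : Fin m → ℝ) 1) < ∞ := by
    have : (μH[(m:ℝ)] : Measure (Fin m → ℝ)) = volume := by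
      have := hausdorffMeasure_pi_real (ι := Fin m)
      simpa using this
    rw [this]
    exact (isCompact_closedBall _ _).measure_lt_top
  refine lt_of_le_of_lt h1 (ENNReal.mul_lt_top ?_ h2)
  exact ENNReal.rpow_lt_top_of_nonneg (by positivity) ENNReal.coe_ne_top

lemma disk_bound (n : ℕ) (hn : 2 ≤ n) (p : EuclideanSpace ℝ (Fin n)) (hp : ‖p‖ = 1)
    (ρ : ℝ) (hρ : 0 < ρ) :
    μH[(n:ℝ)-1] {z : EuclideanSpace ℝ (Fin n) | ⟪p, z - p⟫ = 0 ∧ ‖z - p‖ ≤ ρ}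
      ≤ ENNReal.ofReal (ρ ^ ((n:ℝ)-1)) *
        μH[(n:ℝ)-1] (closedBall (0 : EuclideanSpace ℝ (Fin (n-1))) 1) := by
  set d : ℝ := (n:ℝ) - 1 with hd
  have hd0 : 0 ≤ d := by
    simp only [hd, sub_nonneg]
    exact_mod_cast le_trans one_le_two hn
  have hp0 : p ≠ 0 := by intro h; rw [h] at hp; simp at hp
  set V : Submodule ℝ (EuclideanSpace ℝ (Fin n)) := (ℝ ∙ p)ᗮ with hV
  -- step 1 : the disk is a translate of the ball in V
  have hset : {z : EuclideanSpace ℝ (Fin n) | ⟪p, z - p⟫ = 0 ∧ ‖z - p‖ ≤ ρ}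
      = (fun v : EuclideanSpace ℝ (Fin n) => p + v) '' (Subtype.val '' (closedBall (0 : V) ρ)) := by
    ext z
    simp only [Set.mem_setOf_eq, Set.mem_image]
    constructor
    · rintro ⟨h1, h2⟩
      refine ⟨z - p, ⟨⟨z - p, Submodule.mem_orthogonal_singleton_iff_inner_right.2 h1⟩, ?_, rfl⟩,
        by abel⟩
      simpa [mem_closedBall, dist_eq_norm] using h2
    · rintro ⟨v, ⟨w, hw2, rfl⟩, rfl⟩
      constructor
      · have := Submodule.mem_orthogonal_singleton_iff_inner_right.1 w.2
        simpa using this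
      · simpa [mem_closedBall, dist_eq_norm] using hw2
  rw [hset]
  have h1 : μH[d] ((fun v : EuclideanSpace ℝ (Fin n) => p + v) '' (Subtype.val '' (closedBall (0 : V) ρ)))
      = μH[d] (Subtype.val '' (closedBall (0 : V) ρ)) := by
    exact Isometry.hausdorffMeasure_image (isometry_add_left p) (Or.inl hd0) _
  have h2 : μH[d] ((Subtype.val : V → EuclideanSpace ℝ (Fin n)) '' (closedBall (0 : V) ρ))
      = μH[d] (closedBall (0 : V) ρ) :=
    Isometry.hausdorffMeasure_image isometry_subtype_coe (Or.inl hd0) _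
  rw [h1, h2]
  -- step 2 : V is isometric to EuclideanSpace ℝ (Fin (n-1))
  haveI : Fact (finrank ℝ (EuclideanSpace ℝ (Fin n)) = (n-1) + 1) := ⟨by
    rw [finrank_euclideanSpace_fin]; omega⟩
  set b := OrthonormalBasis.fromOrthogonalSpanSingleton (𝕜 := ℝ) (n-1) hp0
  have h3 : μH[d] (closedBall (0 : V) ρ)
      = μH[d] (closedBall (0 : EuclideanSpace ℝ (Fin (n-1))) ρ) := by
    have : b.repr '' (closedBall (0 : V) ρ)
        = closedBall (0 : EuclideanSpace ℝ (Fin (n-1))) ρ := by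
      have := b.repr.toIsometryEquiv.image_closedBall (0 : V) ρ
      simpa using this
    rw [← this]
    exact (Isometry.hausdorffMeasure_image b.repr.isometry (Or.inl hd0) _).symm
  rw [h3]
  -- step 3 : scaling
  have h4 : closedBall (0 : EuclideanSpace ℝ (Fin (n-1))) ρ
      = ρ • closedBall (0 : EuclideanSpace ℝ (Fin (n-1))) 1 := by
    rw [_root_.smul_closedBall _ _ zero_le_one]
    simp [abs_of_pos hρ, Real.norm_eq_abs]
  rw [h4, MeasureTheory.Measure.hausdorffMeasure_smul₀ hd0 (ne_of_gt hρ)]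
  rw [ENNReal.smul_def, smul_eq_mul]
  gcongr
  rw [← ENNReal.ofReal_rpow_of_pos hρ]
  apply le_of_eq
  have hor : ENNReal.ofReal ρ = (‖ρ‖₊ : ℝ≥0∞) := by
    simp [ENNReal.ofReal, Real.nnnorm_of_nonneg hρ.le, Real.toNNReal_of_nonneg hρ.le]
  rw [hor, ENNReal.coe_rpow_of_nonneg _ hd0]

lemma proj_lipschitz (n : ℕ) :
    LipschitzOnWith 2 (fun z : EuclideanSpace ℝ (Fin n) => ‖z‖⁻¹ • z)
      {z : EuclideanSpace ℝ (Fin n) | 1 ≤ ‖z‖} := by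
  apply LipschitzOnWith.of_dist_le_mul
  intro z hz w hw
  simp only [Set.mem_setOf_eq] at hz hw
  have hz0 : (0:ℝ) < ‖z‖ := lt_of_lt_of_le one_pos hz
  have hw0 : (0:ℝ) < ‖w‖ := lt_of_lt_of_le one_pos hw
  rw [dist_eq_norm, dist_eq_norm]
  have key : ‖z‖⁻¹ • z - ‖w‖⁻¹ • w
      = ‖z‖⁻¹ • (z - w) + (‖z‖⁻¹ - ‖w‖⁻¹) • w := by
    rw [smul_sub, sub_smul]; abel
  rw [key]
  have h1 : ‖‖z‖⁻¹ • (z - w)‖ ≤ ‖z - w‖ := by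
    rw [norm_smul, Real.norm_eq_abs, abs_of_pos (inv_pos.2 hz0)]
    calc ‖z‖⁻¹ * ‖z - w‖ ≤ 1 * ‖z - w‖ := by
          apply mul_le_mul_of_nonneg_right _ (norm_nonneg _)
          exact inv_le_one_of_one_le₀ hz
      _ = ‖z - w‖ := one_mul _
  have h2 : ‖(‖z‖⁻¹ - ‖w‖⁻¹) • w‖ ≤ ‖z - w‖ := by
    rw [norm_smul, Real.norm_eq_abs]
    have e1 : ‖z‖⁻¹ - ‖w‖⁻¹ = (‖w‖ - ‖z‖) / (‖z‖ * ‖w‖) := by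
      field_simp
    rw [e1, abs_div, abs_of_pos (by positivity : (0:ℝ) < ‖z‖ * ‖w‖)]
    have e2 : |‖w‖ - ‖z‖| ≤ ‖z - w‖ := by
      rw [abs_sub_comm]
      exact abs_norm_sub_norm_le z w
    calc |‖w‖ - ‖z‖| / (‖z‖ * ‖w‖) * ‖w‖ = |‖w‖ - ‖z‖| / ‖z‖ := by
          field_simp
      _ ≤ |‖w‖ - ‖z‖| / 1 := by
          apply div_le_div_of_nonneg_left (abs_nonneg _) one_pos hz
      _ = |‖w‖ - ‖z‖| := div_one _
      _ ≤ ‖z - w‖ := e2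
  calc ‖‖z‖⁻¹ • (z - w) + (‖z‖⁻¹ - ‖w‖⁻¹) • w‖
      ≤ ‖‖z‖⁻¹ • (z - w)‖ + ‖(‖z‖⁻¹ - ‖w‖⁻¹) • w‖ := norm_add_le _ _
    _ ≤ ‖z - w‖ + ‖z - w‖ := add_le_add h1 h2
    _ = 2 * ‖z - w‖ := by ring
    _ = ((2:ℝ≥0):ℝ) * ‖z - w‖ := by norm_num

lemma cap_subset (n : ℕ) (p y : EuclideanSpace ℝ (Fin n)) (hp : ‖p‖ = 1) (hy : ‖y‖ = 1)
    (hr : ‖y - p‖ ≤ 1/2) :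
    y ∈ (fun z : EuclideanSpace ℝ (Fin n) => ‖z‖⁻¹ • z) ''
      ({z | ⟪p, z - p⟫ = 0 ∧ ‖z - p‖ ≤ 2 * ‖y - p‖} ∩ {z | 1 ≤ ‖z‖}) := by
  set c : ℝ := ⟪p, y⟫ with hc
  have hsq : ‖y - p‖ ^ 2 = 2 - 2 * c := by
    rw [hc, real_inner_comm y p, norm_sub_sq_real, hy, hp]
    ring
  have hc78 : 7/8 ≤ c := by nlinarith [sq_nonneg (‖y - p‖ - 1/2), norm_nonneg (y - p)]
  have hc1 : c ≤ 1 := by nlinarith [sq_nonneg ‖y - p‖]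
  have hc0 : 0 < c := by linarith
  set z : EuclideanSpace ℝ (Fin n) := c⁻¹ • y with hz
  have hnz : ‖z‖ = c⁻¹ := by
    rw [hz, norm_smul, Real.norm_eq_abs, abs_of_pos (inv_pos.2 hc0), hy, mul_one]
  have hz1 : 1 ≤ ‖z‖ := by
    rw [hnz]
    rw [le_inv_comm₀ one_pos hc0]
    simpa using hc1
  have hci : c * c⁻¹ = 1 := mul_inv_cancel₀ (ne_of_gt hc0)
  have hip : ⟪p, z⟫ = 1 := by
    rw [hz, real_inner_smul_right, ← hc]
    rw [mul_comm] at hci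
    exact hci
  refine ⟨z, ⟨⟨?_, ?_⟩, hz1⟩, ?_⟩
  · rw [inner_sub_right, hip, real_inner_self_eq_norm_sq, hp]
    norm_num
  · -- ‖z - p‖ ≤ 2 ‖y - p‖
    have hzp : ‖z - p‖ ^ 2 = c⁻¹ ^ 2 - 1 := by
      rw [norm_sub_sq_real, hnz, real_inner_comm p z, hip, hp]
      ring
    have hile : c⁻¹ ≤ 8/7 := by
      rw [inv_le_comm₀ hc0 (by norm_num)]
      linarith
    have h8 : c⁻¹ ^ 2 - 1 ≤ 4 * (2 - 2 * c) := by nlinarith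
    have : ‖z - p‖ ^ 2 ≤ (2 * ‖y - p‖) ^ 2 := by
      rw [hzp]
      calc c⁻¹ ^ 2 - 1 ≤ 4 * (2 - 2*c) := h8
        _ = (2 * ‖y - p‖)^2 := by rw [mul_pow, hsq]; ring
    exact (pow_le_pow_iff_left₀ (norm_nonneg _) (by positivity) (by norm_num)).1 this
  · show ‖z‖⁻¹ • z = y
    rw [hnz, inv_inv, hz, smul_smul, hci, one_smul]

lemma kball_lt_top' (n : ℕ) (hn : 2 ≤ n) :
    μH[(n:ℝ)-1] (closedBall (0 : EuclideanSpace ℝ (Fin (n-1))) 1) < ∞ := by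
  have h := kball_lt_top (n-1)
  have hcast : ((n-1 : ℕ) : ℝ) = (n:ℝ) - 1 := by
    rw [Nat.cast_sub (by omega : 1 ≤ n)]; norm_num
  rwa [hcast] at h

lemma cap_bound_p (n : ℕ) (hn : 2 ≤ n) (p : EuclideanSpace ℝ (Fin n)) (hp : ‖p‖ = 1)
    (r : ℝ) (hr0 : 0 < r) (hr : r ≤ 1/2) :
    μH[(n:ℝ)-1] (sphere (0 : EuclideanSpace ℝ (Fin n)) 1 ∩ closedBall p r)
      ≤ (2:ℝ≥0∞) ^ ((n:ℝ)-1) * (ENNReal.ofReal ((2*r) ^ ((n:ℝ)-1)) *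
          μH[(n:ℝ)-1] (closedBall (0 : EuclideanSpace ℝ (Fin (n-1))) 1)) := by
  have hd0 : (0:ℝ) ≤ (n:ℝ) - 1 := by
    have : (1:ℝ) ≤ n := by exact_mod_cast le_trans one_le_two hn
    linarith
  set P : EuclideanSpace ℝ (Fin n) → EuclideanSpace ℝ (Fin n) := fun z => ‖z‖⁻¹ • z with hP
  set D : Set (EuclideanSpace ℝ (Fin n)) := {z | ⟪p, z - p⟫ = 0 ∧ ‖z - p‖ ≤ 2 * r} with hD
  have hsub : sphere (0 : EuclideanSpace ℝ (Fin n)) 1 ∩ closedBall p r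
      ⊆ P '' (D ∩ {z | 1 ≤ ‖z‖}) := by
    rintro y ⟨hy1, hy2⟩
    have hy : ‖y‖ = 1 := by simpa using hy1
    have hyp : ‖y - p‖ ≤ r := by
      have := mem_closedBall.1 hy2
      rwa [dist_eq_norm] at this
    have hmem := cap_subset n p y hp hy (le_trans hyp hr)
    refine Set.image_mono (f := P) ?_ hmem
    apply Set.inter_subset_inter_left
    rintro z ⟨h1, h2⟩
    exact ⟨h1, le_trans h2 (by linarith)⟩
  calc μH[(n:ℝ)-1] (sphere (0 : EuclideanSpace ℝ (Fin n)) 1 ∩ closedBall p r)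
      ≤ μH[(n:ℝ)-1] (P '' (D ∩ {z | 1 ≤ ‖z‖})) := measure_mono hsub
    _ ≤ (2:ℝ≥0∞) ^ ((n:ℝ)-1) * μH[(n:ℝ)-1] (D ∩ {z | 1 ≤ ‖z‖}) := by
        have h := ((proj_lipschitz n).mono
          (Set.inter_subset_right (s := D))).hausdorffMeasure_image_le hd0
        simpa using h
    _ ≤ (2:ℝ≥0∞) ^ ((n:ℝ)-1) * μH[(n:ℝ)-1] D :=
        mul_le_mul' le_rfl (measure_mono Set.inter_subset_left)
    _ ≤ (2:ℝ≥0∞) ^ ((n:ℝ)-1) * (ENNReal.ofReal ((2*r) ^ ((n:ℝ)-1)) *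
          μH[(n:ℝ)-1] (closedBall (0 : EuclideanSpace ℝ (Fin (n-1))) 1)) := by
        gcongr
        exact disk_bound n hn p hp (2*r) (by linarith)

lemma cap_bound_x (n : ℕ) (hn : 2 ≤ n) (x : EuclideanSpace ℝ (Fin n))
    (r : ℝ) (hr0 : 0 < r) (hr : r ≤ 1/4) :
    μH[(n:ℝ)-1] (sphere (0 : EuclideanSpace ℝ (Fin n)) 1 ∩ closedBall x r)
      ≤ (2:ℝ≥0∞) ^ ((n:ℝ)-1) * (ENNReal.ofReal ((4*r) ^ ((n:ℝ)-1)) *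
          μH[(n:ℝ)-1] (closedBall (0 : EuclideanSpace ℝ (Fin (n-1))) 1)) := by
  rcases Set.eq_empty_or_nonempty
      (sphere (0 : EuclideanSpace ℝ (Fin n)) 1 ∩ closedBall x r) with h | ⟨p, hp1, hp2⟩
  · rw [h]; simp
  · have hp : ‖p‖ = 1 := by simpa using hp1
    have hsub : sphere (0 : EuclideanSpace ℝ (Fin n)) 1 ∩ closedBall x r
        ⊆ sphere (0 : EuclideanSpace ℝ (Fin n)) 1 ∩ closedBall p (2*r) := by
      rintro y ⟨h1, h2⟩
      refine ⟨h1, mem_closedBall.2 ?_⟩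
      calc dist y p ≤ dist y x + dist x p := dist_triangle _ _ _
        _ ≤ r + r := add_le_add (mem_closedBall.1 h2) (by
            rw [dist_comm]; exact mem_closedBall.1 hp2)
        _ = 2 * r := by ring
    calc μH[(n:ℝ)-1] (sphere (0 : EuclideanSpace ℝ (Fin n)) 1 ∩ closedBall x r)
        ≤ μH[(n:ℝ)-1] (sphere (0 : EuclideanSpace ℝ (Fin n)) 1 ∩ closedBall p (2*r)) :=
          measure_mono hsub
      _ ≤ (2:ℝ≥0∞) ^ ((n:ℝ)-1) * (ENNReal.ofReal ((2*(2*r)) ^ ((n:ℝ)-1)) *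
            μH[(n:ℝ)-1] (closedBall (0 : EuclideanSpace ℝ (Fin (n-1))) 1)) :=
          cap_bound_p n hn p hp (2*r) (by linarith) (by linarith)
      _ = (2:ℝ≥0∞) ^ ((n:ℝ)-1) * (ENNReal.ofReal ((4*r) ^ ((n:ℝ)-1)) *
            μH[(n:ℝ)-1] (closedBall (0 : EuclideanSpace ℝ (Fin (n-1))) 1)) := by
          norm_num [show 2*(2*r) = 4*r by ring]

lemma sphere_lt_top (n : ℕ) (hn : 2 ≤ n) :
    μH[(n:ℝ)-1] (sphere (0 : EuclideanSpace ℝ (Fin n)) 1) < ∞ := by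
  have hcpt : IsCompact (sphere (0 : EuclideanSpace ℝ (Fin n)) 1) := isCompact_sphere _ _
  have hcov : sphere (0 : EuclideanSpace ℝ (Fin n)) 1
      ⊆ ⋃ p : EuclideanSpace ℝ (Fin n), ball p (1/4) := fun y _ =>
    Set.mem_iUnion.2 ⟨y, by simp⟩
  obtain ⟨t, ht⟩ := hcpt.elim_finite_subcover (fun p : EuclideanSpace ℝ (Fin n) => ball p (1/4))
    (fun _ => isOpen_ball) hcov
  have hsub : sphere (0 : EuclideanSpace ℝ (Fin n)) 1
      ⊆ ⋃ p ∈ t, (sphere (0 : EuclideanSpace ℝ (Fin n)) 1 ∩ closedBall p (1/4)) := by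
    intro y hy
    obtain ⟨p, hpt, hyp⟩ := Set.mem_iUnion₂.1 (ht hy)
    exact Set.mem_iUnion₂.2 ⟨p, hpt, hy, ball_subset_closedBall hyp⟩
  calc μH[(n:ℝ)-1] (sphere (0 : EuclideanSpace ℝ (Fin n)) 1)
      ≤ μH[(n:ℝ)-1] (⋃ p ∈ t, (sphere (0 : EuclideanSpace ℝ (Fin n)) 1 ∩ closedBall p (1/4))) :=
        measure_mono hsub
    _ ≤ ∑ p ∈ t, μH[(n:ℝ)-1] (sphere (0 : EuclideanSpace ℝ (Fin n)) 1 ∩ closedBall p (1/4)) :=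
        measure_biUnion_finset_le _ _
    _ < ∞ := by
        apply ENNReal.sum_lt_top.2
        intro p _
        refine lt_of_le_of_lt (cap_bound_x n hn p (1/4) (by norm_num) le_rfl) ?_
        apply ENNReal.mul_lt_top
        · exact ENNReal.rpow_lt_top_of_nonneg (by
            have : (1:ℝ) ≤ n := by exact_mod_cast le_trans one_le_two hn
            linarith) (by norm_num)
        · exact ENNReal.mul_lt_top ENNReal.ofReal_lt_top (kball_lt_top' n hn)

lemma cap_all (n : ℕ) (hn : 2 ≤ n) :
    ∃ A : ℝ≥0∞, A ≠ ∞ ∧ ∀ (x : EuclideanSpace ℝ (Fin n)) (r : ℝ), 0 < r →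
      μH[(n:ℝ)-1] (sphere (0 : EuclideanSpace ℝ (Fin n)) 1 ∩ closedBall x r)
        ≤ A * ENNReal.ofReal (r ^ ((n:ℝ)-1)) := by
  have hd0 : (0:ℝ) ≤ (n:ℝ) - 1 := by
    have : (1:ℝ) ≤ n := by exact_mod_cast le_trans one_le_two hn
    linarith
  set Kb := μH[(n:ℝ)-1] (closedBall (0 : EuclideanSpace ℝ (Fin (n-1))) 1) with hKb
  set M := μH[(n:ℝ)-1] (sphere (0 : EuclideanSpace ℝ (Fin n)) 1) with hM
  refine ⟨(2:ℝ≥0∞) ^ ((n:ℝ)-1) * ENNReal.ofReal ((4:ℝ) ^ ((n:ℝ)-1)) * Kb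
      + M * ENNReal.ofReal ((4:ℝ) ^ ((n:ℝ)-1)), ?_, ?_⟩
  · apply ENNReal.add_ne_top.2
    constructor
    · apply (ENNReal.mul_lt_top (ENNReal.mul_lt_top ?_ ENNReal.ofReal_lt_top)
        (kball_lt_top' n hn)).ne
      exact ENNReal.rpow_lt_top_of_nonneg hd0 (by norm_num)
    · exact (ENNReal.mul_lt_top (sphere_lt_top n hn) ENNReal.ofReal_lt_top).ne
  · intro x r hr0
    rcases le_or_gt r (1/4) with h | h
    · calc μH[(n:ℝ)-1] (sphere (0 : EuclideanSpace ℝ (Fin n)) 1 ∩ closedBall x r)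
          ≤ (2:ℝ≥0∞) ^ ((n:ℝ)-1) * (ENNReal.ofReal ((4*r) ^ ((n:ℝ)-1)) * Kb) :=
            cap_bound_x n hn x r hr0 h
        _ = (2:ℝ≥0∞) ^ ((n:ℝ)-1) * ENNReal.ofReal ((4:ℝ) ^ ((n:ℝ)-1)) * Kb
            * ENNReal.ofReal (r ^ ((n:ℝ)-1)) := by
            rw [Real.mul_rpow (by norm_num) hr0.le,
              ENNReal.ofReal_mul (by positivity)]
            ring
        _ ≤ _ := by
            apply mul_le_mul' le_self_add le_rfl
    · calc μH[(n:ℝ)-1] (sphere (0 : EuclideanSpace ℝ (Fin n)) 1 ∩ closedBall x r)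
          ≤ M := measure_mono Set.inter_subset_left
        _ = M * 1 := (mul_one M).symm
        _ ≤ M * (ENNReal.ofReal ((4:ℝ) ^ ((n:ℝ)-1)) * ENNReal.ofReal (r ^ ((n:ℝ)-1))) := by
            apply mul_le_mul' le_rfl
            rw [← ENNReal.ofReal_mul (by positivity), ← Real.mul_rpow (by norm_num) hr0.le]
            rw [show (1:ℝ≥0∞) = ENNReal.ofReal 1 from (ENNReal.ofReal_one).symm]
            apply ENNReal.ofReal_le_ofReal
            calc (1:ℝ) = 1 ^ ((n:ℝ)-1) := (Real.one_rpow _).symm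
              _ ≤ (4*r) ^ ((n:ℝ)-1) := Real.rpow_le_rpow (by norm_num) (by linarith) hd0
        _ = M * ENNReal.ofReal ((4:ℝ) ^ ((n:ℝ)-1)) * ENNReal.ofReal (r ^ ((n:ℝ)-1)) := by
            ring
        _ ≤ _ := by
            apply mul_le_mul' le_add_self le_rfl

theorem stmt_5 (n : ℕ) (hn : 2 ≤ n) (α : ℝ) (hα0 : 0 < α) (hα1 : α < 1) :
    ∃ C > 0, ∀ x : EuclideanSpace ℝ (Fin n), ‖x‖ < 1 →
      (∫ y in sphere (0 : EuclideanSpace ℝ (Fin n)) 1, ‖x - y‖ ^ (α - n)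
          ∂μH[(n : ℝ) - 1])
        ≤ C * (1 - ‖x‖) ^ (α - 1) := by
  classical
  obtain ⟨A, hAne, hA⟩ := cap_all n hn
  have hn1 : (1:ℝ) ≤ n := by exact_mod_cast le_trans one_le_two hn
  have hd0 : (0:ℝ) ≤ (n:ℝ) - 1 := by linarith
  set d : ℝ := (n:ℝ) - 1 with hd
  set q : ℝ := (2:ℝ) ^ (α - 1) with hqdef
  have hq1 : q < 1 := Real.rpow_lt_one_of_one_lt_of_neg one_lt_two (by linarith)
  have hq0 : 0 < q := Real.rpow_pos_of_pos two_pos _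
  have hsub1 : (1 : ℝ≥0∞) - ENNReal.ofReal q ≠ 0 := by
    rw [← pos_iff_ne_zero]
    exact tsub_pos_iff_lt.2 (ENNReal.ofReal_lt_one.2 hq1)
  set G : ℝ≥0∞ := A * ENNReal.ofReal ((2:ℝ) ^ d) * (1 - ENNReal.ofReal q)⁻¹ with hG
  have hGne : G ≠ ∞ := by
    apply ENNReal.mul_ne_top (ENNReal.mul_ne_top hAne ENNReal.ofReal_ne_top)
    exact ENNReal.inv_ne_top.2 hsub1
  refine ⟨G.toReal + 1, by positivity, ?_⟩
  intro x hx
  set δ : ℝ := 1 - ‖x‖ with hδ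
  have hδ0 : 0 < δ := by simp [hδ]; linarith
  set S := sphere (0 : EuclideanSpace ℝ (Fin n)) 1 with hS
  set f : EuclideanSpace ℝ (Fin n) → ℝ := fun y => ‖x - y‖ ^ (α - n) with hf
  have hmeas : Measurable f := by
    rw [hf]
    fun_prop
  have hnn : ∀ y, 0 ≤ f y := fun y => Real.rpow_nonneg (norm_nonneg _) _
  -- the dyadic rings
  set Ak : ℕ → Set (EuclideanSpace ℝ (Fin n)) := fun k =>
    (S ∩ closedBall x ((2:ℝ)^(k+1) * δ)) \ ball x ((2:ℝ)^k * δ) with hAk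
  have hcover : S ⊆ ⋃ k, Ak k := by
    intro y hy
    have hyn : ‖y‖ = 1 := by simpa [hS] using hy
    have hdlow : δ ≤ dist y x := by
      have h1 : ‖y‖ - ‖x‖ ≤ ‖y - x‖ := norm_sub_norm_le y x
      rw [dist_eq_norm]
      rw [hyn] at h1
      linarith
    have hex : ∃ k : ℕ, dist y x < (2:ℝ)^(k+1) * δ := by
      obtain ⟨k, hk⟩ := pow_unbounded_of_one_lt (dist y x / δ) one_lt_two
      rw [div_lt_iff₀ hδ0] at hk
      refine ⟨k, lt_of_lt_of_le hk ?_⟩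
      have : (2:ℝ)^k ≤ (2:ℝ)^(k+1) := by
        apply pow_le_pow_right₀ one_le_two (Nat.le_succ k)
      nlinarith
    refine Set.mem_iUnion.2 ⟨Nat.find hex, ⟨⟨hy, mem_closedBall.2 (Nat.find_spec hex).le⟩, ?_⟩⟩
    intro hball
    rw [mem_ball] at hball
    rcases Nat.eq_zero_or_pos (Nat.find hex) with hk0 | hkpos
    · rw [hk0] at hball
      norm_num at hball
      linarith
    · have hmin := Nat.find_min hex (m := Nat.find hex - 1) (by omega)
      apply hmin
      have heq : Nat.find hex - 1 + 1 = Nat.find hex := by omega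
      rw [heq]
      exact hball
  -- bound the lintegral
  have key : (∫⁻ y in S, ENNReal.ofReal (f y) ∂μH[d])
      ≤ G * ENNReal.ofReal (δ ^ (α - 1)) := by
    have hstep1 : (∫⁻ y in S, ENNReal.ofReal (f y) ∂μH[d])
        ≤ ∑' k, ∫⁻ y in Ak k, ENNReal.ofReal (f y) ∂μH[d] := by
      refine le_trans (lintegral_mono' (Measure.restrict_mono hcover le_rfl) le_rfl) ?_
      exact lintegral_iUnion_le _ _
    have hstep2 : ∀ k : ℕ, (∫⁻ y in Ak k, ENNReal.ofReal (f y) ∂μH[d])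
        ≤ ENNReal.ofReal (((2:ℝ)^k * δ) ^ (α - n)) * (A * ENNReal.ofReal ((((2:ℝ)^(k+1) * δ)) ^ d)) := by
      intro k
      have hpt : ∀ y ∈ Ak k, ENNReal.ofReal (f y) ≤ ENNReal.ofReal (((2:ℝ)^k * δ) ^ (α - n)) := by
        rintro y ⟨-, hy2⟩
        rw [mem_ball, not_lt] at hy2
        apply ENNReal.ofReal_le_ofReal
        apply Real.rpow_le_rpow_of_nonpos (by positivity) _ (by linarith)
        rw [show ‖x - y‖ = dist y x by rw [dist_eq_norm, norm_sub_rev]]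
        exact hy2
      calc (∫⁻ y in Ak k, ENNReal.ofReal (f y) ∂μH[d])
          ≤ ∫⁻ _ in Ak k, ENNReal.ofReal (((2:ℝ)^k * δ) ^ (α - n)) ∂μH[d] :=
            setLIntegral_mono measurable_const hpt
        _ = ENNReal.ofReal (((2:ℝ)^k * δ) ^ (α - n)) * μH[d] (Ak k) := by
            rw [setLIntegral_const]
        _ ≤ ENNReal.ofReal (((2:ℝ)^k * δ) ^ (α - n)) *
              (A * ENNReal.ofReal ((((2:ℝ)^(k+1) * δ)) ^ d)) := by
            apply mul_le_mul' le_rfl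
            refine le_trans (measure_mono ?_) (hA x ((2:ℝ)^(k+1) * δ) (by positivity))
            exact Set.diff_subset
    have hterm : ∀ k : ℕ, ((2:ℝ)^k * δ) ^ (α - n) * ((2:ℝ)^(k+1) * δ) ^ d
        = 2 ^ d * δ ^ (α - 1) * q ^ k := by
      intro k
      rw [Real.mul_rpow (by positivity) hδ0.le, Real.mul_rpow (by positivity) hδ0.le]
      rw [← Real.rpow_natCast (2:ℝ) k, ← Real.rpow_natCast (2:ℝ) (k+1),
        ← Real.rpow_mul (by norm_num), ← Real.rpow_mul (by norm_num)]
      rw [hqdef, ← Real.rpow_natCast ((2:ℝ) ^ (α-1)) k, ← Real.rpow_mul (by norm_num)]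
      rw [show (2:ℝ) ^ ((k:ℝ) * (α - ↑n)) * δ ^ (α - ↑n) * ((2:ℝ) ^ ((↑(k+1):ℝ) * d) * δ ^ d)
          = ((2:ℝ) ^ ((k:ℝ) * (α - ↑n)) * (2:ℝ) ^ ((↑(k+1):ℝ) * d)) * (δ ^ (α - ↑n) * δ ^ d) by ring]
      rw [← Real.rpow_add two_pos, ← Real.rpow_add hδ0]
      rw [show (2:ℝ) ^ d * δ ^ (α-1) * (2:ℝ) ^ ((α-1) * (k:ℝ))
          = (2:ℝ) ^ (d + (α-1) * (k:ℝ)) * δ ^ (α-1) by rw [Real.rpow_add two_pos]; ring]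
      congr 1
      · congr 1
        push_cast
        rw [hd]
        ring
      · congr 1
        rw [hd]
        ring
    calc (∫⁻ y in S, ENNReal.ofReal (f y) ∂μH[d])
        ≤ ∑' k, ∫⁻ y in Ak k, ENNReal.ofReal (f y) ∂μH[d] := hstep1
      _ ≤ ∑' k : ℕ, ENNReal.ofReal (((2:ℝ)^k * δ) ^ (α - n)) *
            (A * ENNReal.ofReal ((((2:ℝ)^(k+1) * δ)) ^ d)) := ENNReal.tsum_le_tsum hstep2
      _ = ∑' k : ℕ, (A * ENNReal.ofReal ((2:ℝ) ^ d) * ENNReal.ofReal (δ ^ (α-1)))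
            * (ENNReal.ofReal q) ^ k := by
          congr 1
          funext k
          have hq2d : (0:ℝ) ≤ (2:ℝ)^d := Real.rpow_nonneg (by norm_num) _
          have hδa : (0:ℝ) ≤ δ^(α-1) := Real.rpow_nonneg hδ0.le _
          have hqk : (0:ℝ) ≤ q^k := pow_nonneg hq0.le k
          calc ENNReal.ofReal (((2:ℝ)^k * δ) ^ (α - n)) *
                (A * ENNReal.ofReal ((((2:ℝ)^(k+1) * δ)) ^ d))
              = A * ENNReal.ofReal (((2:ℝ)^k * δ) ^ (α - n) * ((2:ℝ)^(k+1) * δ) ^ d) := by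
                rw [ENNReal.ofReal_mul (Real.rpow_nonneg (by positivity) _)]
                ring
            _ = A * ENNReal.ofReal (2 ^ d * δ ^ (α - 1) * q ^ k) := by rw [hterm k]
            _ = (A * ENNReal.ofReal ((2:ℝ) ^ d) * ENNReal.ofReal (δ ^ (α-1)))
                  * (ENNReal.ofReal q) ^ k := by
                rw [ENNReal.ofReal_mul (mul_nonneg hq2d hδa), ENNReal.ofReal_mul hq2d,
                  ENNReal.ofReal_pow hq0.le]
                ring
      _ = (A * ENNReal.ofReal ((2:ℝ) ^ d) * ENNReal.ofReal (δ ^ (α-1)))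
            * (1 - ENNReal.ofReal q)⁻¹ := by
          rw [ENNReal.tsum_mul_left, ENNReal.tsum_geometric]
      _ = G * ENNReal.ofReal (δ ^ (α - 1)) := by
          rw [hG]; ring
  -- convert to the Bochner integral
  have hint : (∫ y in S, f y ∂μH[d]) = (∫⁻ y in S, ENNReal.ofReal (f y) ∂μH[d]).toReal := by
    rw [integral_eq_lintegral_of_nonneg_ae (Filter.Eventually.of_forall hnn)
      hmeas.aestronglyMeasurable]
  rw [hint]
  have hfin : G * ENNReal.ofReal (δ ^ (α - 1)) ≠ ∞ :=
    ENNReal.mul_ne_top hGne ENNReal.ofReal_ne_top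
  calc (∫⁻ y in S, ENNReal.ofReal (f y) ∂μH[d]).toReal
      ≤ (G * ENNReal.ofReal (δ ^ (α - 1))).toReal := ENNReal.toReal_mono hfin key
    _ = G.toReal * δ ^ (α - 1) := by
        rw [ENNReal.toReal_mul, ENNReal.toReal_ofReal (by positivity)]
    _ ≤ (G.toReal + 1) * δ ^ (α - 1) := by
        apply mul_le_mul_of_nonneg_right _ (by positivity)
        linarith
end
end

section
/- Let 0 < α < 1, and let f ∈ C^{k,α}(closure of B_R) in ℝ^n satisfy D^β f(0) = 0 for all multi-indices β with |β| ≤ k−1. Then for any l ≤ k, ‖f‖_α^{(l)} ≤ C R^{k−l} ‖f‖_α^{(k)}, where ‖f‖_α^{(j)} = sup_{|β|=j} (‖D^β f‖_∞ + R^α H_α[D^β f]) and C depends only on n, k, α. -/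
open MeasureTheory Metric

noncomputable section

def ee {n : ℕ} (i : Fin n) : EuclideanSpace ℝ (Fin n) := EuclideanSpace.single i 1

/-- Sup norm of `g` over `s`. -/
def supN {n : ℕ} (s : Set (EuclideanSpace ℝ (Fin n)))
    (g : EuclideanSpace ℝ (Fin n) → ℝ) : ℝ :=
  sSup ((fun x => |g x|) '' s)

/-- Hölder seminorm `H_α[g]` of `g` over `s`. -/
def holdN {n : ℕ} (α : ℝ) (s : Set (EuclideanSpace ℝ (Fin n)))
    (g : EuclideanSpace ℝ (Fin n) → ℝ) : ℝ :=
  sSup {c | ∃ x ∈ s, ∃ y ∈ s, x ≠ y ∧ c = |g x - g y| / ‖x - y‖ ^ α}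

/-- The multi-index-`v` partial derivative of order `j` within `s`. -/
def derivMulti {n : ℕ} (j : ℕ) (v : Fin j → Fin n)
    (f : EuclideanSpace ℝ (Fin n) → ℝ) (s : Set (EuclideanSpace ℝ (Fin n)))
    (x : EuclideanSpace ℝ (Fin n)) : ℝ :=
  iteratedFDerivWithin ℝ j f s x (fun i => ee (v i))

/-- The norm `‖f‖_α^{(j)} = sup_{|β|=j} (‖D^β f‖_∞ + R^α H_α[D^β f])` over the closed ball. -/
def jNorm (n : ℕ) (R α : ℝ) (j : ℕ) (f : EuclideanSpace ℝ (Fin n) → ℝ) : ℝ :=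
  ⨆ v : Fin j → Fin n,
    (supN (closedBall (0 : EuclideanSpace ℝ (Fin n)) R) (derivMulti j v f (closedBall 0 R)) +
      R ^ α * holdN α (closedBall (0 : EuclideanSpace ℝ (Fin n)) R)
        (derivMulti j v f (closedBall 0 R)))

/-! ### Auxiliary lemmas -/

lemma abs_coord_le_norm {n : ℕ} (x : EuclideanSpace ℝ (Fin n)) (c : Fin n) : |x c| ≤ ‖x‖ := by
  rw [EuclideanSpace.norm_eq]
  calc |x c| = Real.sqrt (‖x c‖ ^ 2) := by
        rw [Real.norm_eq_abs, Real.sqrt_sq_eq_abs, abs_abs]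
    _ ≤ _ := Real.sqrt_le_sqrt (Finset.single_le_sum
        (f := fun i => ‖x i‖ ^ 2) (fun i _ => sq_nonneg _) (Finset.mem_univ c))

lemma norm_ee {n : ℕ} (i : Fin n) : ‖(ee i)‖ = 1 := by
  simp [ee, EuclideanSpace.norm_single]

lemma expand_basis {n : ℕ} (x : EuclideanSpace ℝ (Fin n)) :
    x = ∑ c : Fin n, x c • ee c := by
  have := (EuclideanSpace.basisFun (Fin n) ℝ).sum_repr x
  simp only [EuclideanSpace.basisFun_repr, EuclideanSpace.basisFun_apply] at this
  exact this.symm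

/-- A multilinear map on Euclidean space is bounded by its values on basis vectors. -/
lemma ml_bound {n j : ℕ}
    (A : ContinuousMultilinearMap ℝ (fun _ : Fin j => EuclideanSpace ℝ (Fin n)) ℝ)
    {T : ℝ} (hT : 0 ≤ T) (h : ∀ w : Fin j → Fin n, |A (fun i => ee (w i))| ≤ T) :
    ‖A‖ ≤ (n : ℝ) ^ j * T := by
  apply ContinuousMultilinearMap.opNorm_le_bound (by positivity)
  intro m
  have hm : m = fun i => ∑ c : Fin n, m i c • ee c := funext fun i => expand_basis (m i)
  calc ‖A m‖ = ‖A fun i => ∑ c : Fin n, m i c • ee c‖ := by rw [← hm]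
    _ = ‖∑ w : Fin j → Fin n, A fun i => m i (w i) • ee (w i)‖ := by
        rw [A.map_sum (g := fun i c => m i c • ee c)]
    _ ≤ ∑ w : Fin j → Fin n, ‖A fun i => m i (w i) • ee (w i)‖ := norm_sum_le _ _
    _ ≤ ∑ _w : Fin j → Fin n, T * ∏ i, ‖m i‖ := by
        refine Finset.sum_le_sum fun w _ => ?_
        rw [A.map_smul_univ]
        rw [norm_smul]
        have h1 : ‖∏ i, m i (w i)‖ ≤ ∏ i, ‖m i‖ := by
          rw [Real.norm_eq_abs, Finset.abs_prod]
          exact Finset.prod_le_prod (fun i _ => abs_nonneg _)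
            (fun i _ => abs_coord_le_norm (m i) (w i))
        calc ‖∏ i, m i (w i)‖ * ‖A fun i => ee (w i)‖
            ≤ (∏ i, ‖m i‖) * T := by
              apply mul_le_mul h1 _ (norm_nonneg _) (Finset.prod_nonneg fun i _ => norm_nonneg _)
              rw [Real.norm_eq_abs]; exact h w
          _ = T * ∏ i, ‖m i‖ := mul_comm _ _
    _ = (n : ℝ) ^ j * T * ∏ i, ‖m i‖ := by
        rw [Finset.sum_const, Finset.card_univ, nsmul_eq_mul, Fintype.card_fun,
          Fintype.card_fin, Fintype.card_fin]
        push_cast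
        ring

lemma uds {n : ℕ} {R : ℝ} (hR : 0 < R) :
    UniqueDiffOn ℝ (closedBall (0 : EuclideanSpace ℝ (Fin n)) R) := by
  apply uniqueDiffOn_convex (convex_closedBall _ _)
  rw [interior_closedBall _ hR.ne']
  exact ⟨0, mem_ball_self hR⟩

lemma supN_nonneg {n : ℕ} (s : Set (EuclideanSpace ℝ (Fin n))) (g : EuclideanSpace ℝ (Fin n) → ℝ) :
    0 ≤ supN s g :=
  Real.sSup_nonneg (by rintro x ⟨y, -, rfl⟩; exact abs_nonneg _)

lemma holdN_nonneg {n : ℕ} (α : ℝ) (s : Set (EuclideanSpace ℝ (Fin n)))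
    (g : EuclideanSpace ℝ (Fin n) → ℝ) : 0 ≤ holdN α s g := by
  apply Real.sSup_nonneg
  rintro c ⟨x, -, y, -, -, rfl⟩
  positivity

lemma supN_le {n : ℕ} {s : Set (EuclideanSpace ℝ (Fin n))} {g : EuclideanSpace ℝ (Fin n) → ℝ}
    {a : ℝ} (h : ∀ x ∈ s, |g x| ≤ a) (ha : 0 ≤ a) : supN s g ≤ a :=
  Real.sSup_le (by rintro c ⟨x, hx, rfl⟩; exact h x hx) ha

lemma jNorm_nonneg (n : ℕ) {R : ℝ} (α : ℝ) (hR : 0 ≤ R) (j : ℕ)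
    (f : EuclideanSpace ℝ (Fin n) → ℝ) : 0 ≤ jNorm n R α j f :=
  Real.iSup_nonneg fun v => add_nonneg (supN_nonneg _ _)
    (mul_nonneg (Real.rpow_nonneg hR α) (holdN_nonneg _ _ _))

section main

variable {n k : ℕ} {R α : ℝ} {f : EuclideanSpace ℝ (Fin n) → ℝ}

lemma le_supN (hR : 0 < R)
    (hf : ContDiffOn ℝ k f (closedBall (0 : EuclideanSpace ℝ (Fin n)) R))
    {j : ℕ} (hj : j ≤ k) (v : Fin j → Fin n) {x : EuclideanSpace ℝ (Fin n)}
    (hx : x ∈ closedBall (0 : EuclideanSpace ℝ (Fin n)) R) :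
    |derivMulti j v f (closedBall 0 R) x| ≤ supN (closedBall 0 R) (derivMulti j v f (closedBall 0 R)) := by
  unfold supN
  refine le_csSup ?_ (Set.mem_image_of_mem _ hx)
  have h1 := hf.continuousOn_iteratedFDerivWithin (by exact_mod_cast hj) (uds hR)
  have h2 : ContinuousOn (derivMulti j v f (closedBall 0 R))
      (closedBall (0 : EuclideanSpace ℝ (Fin n)) R) :=
    (continuous_eval_const (fun i => ee (v i))).comp_continuousOn h1
  exact (isCompact_closedBall _ _).bddAbove_image h2.abs

/-- pointwise bound by jNorm -/
lemma le_jNorm (hR : 0 < R)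
    (hf : ContDiffOn ℝ k f (closedBall (0 : EuclideanSpace ℝ (Fin n)) R))
    {j : ℕ} (hj : j ≤ k) (v : Fin j → Fin n) {x : EuclideanSpace ℝ (Fin n)}
    (hx : x ∈ closedBall (0 : EuclideanSpace ℝ (Fin n)) R) :
    |derivMulti j v f (closedBall 0 R) x| ≤ jNorm n R α j f := by
  refine (le_supN hR hf hj v hx).trans ?_
  have h1 : supN (closedBall (0 : EuclideanSpace ℝ (Fin n)) R) (derivMulti j v f (closedBall 0 R))
      ≤ supN (closedBall (0 : EuclideanSpace ℝ (Fin n)) R) (derivMulti j v f (closedBall 0 R)) +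
        R ^ α * holdN α (closedBall (0 : EuclideanSpace ℝ (Fin n)) R)
          (derivMulti j v f (closedBall 0 R)) := by
    have := mul_nonneg (Real.rpow_nonneg hR.le α) (holdN_nonneg α
      (closedBall (0 : EuclideanSpace ℝ (Fin n)) R) (derivMulti j v f (closedBall 0 R)))
    linarith
  refine h1.trans ?_
  unfold jNorm
  exact le_ciSup (f := fun w : Fin j → Fin n =>
    supN (closedBall (0 : EuclideanSpace ℝ (Fin n)) R) (derivMulti j w f (closedBall 0 R)) +
      R ^ α * holdN α (closedBall (0 : EuclideanSpace ℝ (Fin n)) R)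
        (derivMulti j w f (closedBall 0 R)))
    (Set.Finite.bddAbove (Set.finite_range _)) v

lemma norm_iter_le (hR : 0 < R)
    (hf : ContDiffOn ℝ k f (closedBall (0 : EuclideanSpace ℝ (Fin n)) R))
    {j : ℕ} (hj : j ≤ k) {z : EuclideanSpace ℝ (Fin n)}
    (hz : z ∈ closedBall (0 : EuclideanSpace ℝ (Fin n)) R) :
    ‖iteratedFDerivWithin ℝ j f (closedBall 0 R) z‖ ≤ (n : ℝ) ^ j * jNorm n R α j f := by
  apply ml_bound _ (jNorm_nonneg n α hR.le j f)
  intro w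
  exact le_jNorm hR hf hj w hz

lemma lip (hR : 0 < R)
    (hf : ContDiffOn ℝ k f (closedBall (0 : EuclideanSpace ℝ (Fin n)) R))
    {j : ℕ} (hj : j < k) (v : Fin j → Fin n) {x y : EuclideanSpace ℝ (Fin n)}
    (hx : x ∈ closedBall (0 : EuclideanSpace ℝ (Fin n)) R)
    (hy : y ∈ closedBall (0 : EuclideanSpace ℝ (Fin n)) R) :
    |derivMulti j v f (closedBall 0 R) x - derivMulti j v f (closedBall 0 R) y| ≤
      ((n : ℝ) ^ (j + 1) * jNorm n R α (j + 1) f) * ‖x - y‖ := by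
  set B := closedBall (0 : EuclideanSpace ℝ (Fin n)) R with hB
  set M := (n : ℝ) ^ (j + 1) * jNorm n R α (j + 1) f with hM
  have hdiff : DifferentiableOn ℝ (iteratedFDerivWithin ℝ j f B) B :=
    hf.differentiableOn_iteratedFDerivWithin (by exact_mod_cast hj) (uds hR)
  have hbound : ∀ z ∈ B, ‖fderivWithin ℝ (iteratedFDerivWithin ℝ j f B) B z‖ ≤ M := by
    intro z hz
    rw [norm_fderivWithin_iteratedFDerivWithin]
    exact norm_iter_le hR hf hj hz
  have key := (convex_closedBall (0 : EuclideanSpace ℝ (Fin n)) R).norm_image_sub_le_of_norm_fderivWithin_le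
    hdiff hbound hy hx
  calc |derivMulti j v f B x - derivMulti j v f B y|
      = ‖(iteratedFDerivWithin ℝ j f B x - iteratedFDerivWithin ℝ j f B y) (fun i => ee (v i))‖ := by
        rw [ContinuousMultilinearMap.sub_apply, Real.norm_eq_abs]; rfl
    _ ≤ ‖iteratedFDerivWithin ℝ j f B x - iteratedFDerivWithin ℝ j f B y‖ * ∏ i, ‖ee (v i)‖ :=
        ContinuousMultilinearMap.le_opNorm _ _
    _ = ‖iteratedFDerivWithin ℝ j f B x - iteratedFDerivWithin ℝ j f B y‖ := by
        simp [norm_ee]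
    _ ≤ M * ‖x - y‖ := key

lemma step (hα0 : 0 < α) (hα1 : α < 1) (hR : 0 < R)
    (hf : ContDiffOn ℝ k f (closedBall (0 : EuclideanSpace ℝ (Fin n)) R))
    (hvan : ∀ m : ℕ, m < k → ∀ v : Fin m → Fin n, derivMulti m v f (closedBall 0 R) 0 = 0)
    {j : ℕ} (hj : j < k) :
    jNorm n R α j f ≤ 3 * (n : ℝ) ^ (j + 1) * R * jNorm n R α (j + 1) f := by
  set B := closedBall (0 : EuclideanSpace ℝ (Fin n)) R with hB
  set M := (n : ℝ) ^ (j + 1) * jNorm n R α (j + 1) f with hM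
  have hMnn : 0 ≤ M := mul_nonneg (by positivity) (jNorm_nonneg n α hR.le _ f)
  have hrhs : 0 ≤ 3 * (n : ℝ) ^ (j + 1) * R * jNorm n R α (j + 1) f := by
    have := jNorm_nonneg n α hR.le (j + 1) f; positivity
  apply Real.iSup_le _ hrhs
  intro v
  have h0B : (0 : EuclideanSpace ℝ (Fin n)) ∈ B := mem_closedBall_self hR.le
  have hsup : supN B (derivMulti j v f B) ≤ M * R := by
    apply supN_le _ (by positivity)
    intro x hx
    have h0 : derivMulti j v f B 0 = 0 := hvan j hj v
    calc |derivMulti j v f B x| = |derivMulti j v f B x - derivMulti j v f B 0| := by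
          rw [h0, sub_zero]
      _ ≤ M * ‖x - 0‖ := lip hR hf hj v hx h0B
      _ ≤ M * R := by
          apply mul_le_mul_of_nonneg_left _ hMnn
          rw [sub_zero]
          simpa [dist_eq_norm] using mem_closedBall_iff_norm.mp hx
  have hhold : holdN α B (derivMulti j v f B) ≤ M * (2 * R) ^ (1 - α) := by
    apply Real.sSup_le _ (by positivity)
    rintro c ⟨x, hx, y, hy, hxy, rfl⟩
    have hne : x - y ≠ 0 := sub_ne_zero.mpr hxy
    have hpos : (0 : ℝ) < ‖x - y‖ := norm_pos_iff.mpr hne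
    have hle2R : ‖x - y‖ ≤ 2 * R := by
      calc ‖x - y‖ ≤ ‖x‖ + ‖y‖ := norm_sub_le _ _
        _ ≤ R + R := add_le_add (by simpa using mem_closedBall_iff_norm.mp hx)
            (by simpa using mem_closedBall_iff_norm.mp hy)
        _ = 2 * R := by ring
    rw [div_le_iff₀ (Real.rpow_pos_of_pos hpos α)]
    calc |derivMulti j v f B x - derivMulti j v f B y| ≤ M * ‖x - y‖ := lip hR hf hj v hx hy
      _ = M * (‖x - y‖ ^ (1 - α) * ‖x - y‖ ^ α) := by
          rw [← Real.rpow_add hpos, show 1 - α + α = (1:ℝ) by ring, Real.rpow_one]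
      _ = M * ‖x - y‖ ^ (1 - α) * ‖x - y‖ ^ α := (mul_assoc _ _ _).symm
      _ ≤ M * (2 * R) ^ (1 - α) * ‖x - y‖ ^ α := by
          apply mul_le_mul_of_nonneg_right _ (Real.rpow_nonneg hpos.le α)
          exact mul_le_mul_of_nonneg_left
            (Real.rpow_le_rpow hpos.le hle2R (by linarith)) hMnn
  have hterm : R ^ α * holdN α B (derivMulti j v f B) ≤ 2 * (M * R) := by
    calc R ^ α * holdN α B (derivMulti j v f B)
        ≤ R ^ α * (M * (2 * R) ^ (1 - α)) :=
          mul_le_mul_of_nonneg_left hhold (Real.rpow_nonneg hR.le α)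
      _ = M * (2 : ℝ) ^ (1 - α) * R := by
          rw [Real.mul_rpow (by norm_num) hR.le]
          rw [show R ^ α * (M * ((2:ℝ) ^ (1 - α) * R ^ (1 - α)))
              = M * (2:ℝ) ^ (1 - α) * (R ^ α * R ^ (1 - α)) by ring]
          rw [← Real.rpow_add hR, show α + (1 - α) = (1:ℝ) by ring, Real.rpow_one]
      _ ≤ 2 * (M * R) := by
          have h2 : (2 : ℝ) ^ (1 - α) ≤ 2 := by
            calc (2 : ℝ) ^ (1 - α) ≤ (2 : ℝ) ^ (1 : ℝ) :=
              Real.rpow_le_rpow_of_exponent_le (by norm_num) (by linarith)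
            _ = 2 := Real.rpow_one 2
          have : M * (2:ℝ) ^ (1 - α) * R ≤ M * 2 * R := by
            apply mul_le_mul_of_nonneg_right _ hR.le
            exact mul_le_mul_of_nonneg_left h2 hMnn
          linarith
  calc supN B (derivMulti j v f B) + R ^ α * holdN α B (derivMulti j v f B)
      ≤ M * R + 2 * (M * R) := add_le_add hsup hterm
    _ = 3 * (n : ℝ) ^ (j + 1) * R * jNorm n R α (j + 1) f := by rw [hM]; ring

end main

theorem stmt_8 (n k : ℕ) (α : ℝ) (hα0 : 0 < α) (hα1 : α < 1) :
    ∃ C > 0, ∀ R : ℝ, 0 < R → ∀ f : EuclideanSpace ℝ (Fin n) → ℝ,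
      ContDiffOn ℝ k f (closedBall (0 : EuclideanSpace ℝ (Fin n)) R) →
      -- f is of class C^{k,α}: the k-th order Hölder quotients are bounded
      (∀ v : Fin k → Fin n,
        BddAbove {c | ∃ x ∈ closedBall (0 : EuclideanSpace ℝ (Fin n)) R,
          ∃ y ∈ closedBall (0 : EuclideanSpace ℝ (Fin n)) R, x ≠ y ∧
            c = |derivMulti k v f (closedBall 0 R) x - derivMulti k v f (closedBall 0 R) y| /
                ‖x - y‖ ^ α}) →
      -- all derivatives of order ≤ k-1 vanish at the origin
      (∀ m : ℕ, m < k → ∀ v : Fin m → Fin n,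
        derivMulti m v f (closedBall 0 R) 0 = 0) →
      ∀ l : ℕ, l ≤ k →
        jNorm n R α l f ≤ C * R ^ (k - l) * jNorm n R α k f := by
  set c : ℝ := 3 * ((n : ℝ) + 1) ^ k with hc
  have hc0 : 0 ≤ c := by positivity
  have hc1 : (1 : ℝ) ≤ c + 1 := by linarith
  refine ⟨(c + 1) ^ k, by positivity, ?_⟩
  intro R hR f hf hbdd hvan l hl
  -- main claim by induction on d = k - l
  have main : ∀ d l', l' + d = k →
      jNorm n R α l' f ≤ (c + 1) ^ d * R ^ d * jNorm n R α k f := by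
    intro d
    induction d with
    | zero =>
      intro l' hl'
      simp only [Nat.add_zero] at hl'
      subst hl'
      have := jNorm_nonneg n α hR.le l' f
      nlinarith
    | succ d ih =>
      intro l' hl'
      have hl'k : l' < k := by omega
      have h1 : jNorm n R α l' f ≤ 3 * (n : ℝ) ^ (l' + 1) * R * jNorm n R α (l' + 1) f :=
        step hα0 hα1 hR hf hvan hl'k
      have h2 : jNorm n R α (l' + 1) f ≤ (c + 1) ^ d * R ^ d * jNorm n R α k f :=
        ih (l' + 1) (by omega)
      have hcoef : 3 * (n : ℝ) ^ (l' + 1) ≤ c + 1 := by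
        have hpow : (n : ℝ) ^ (l' + 1) ≤ ((n : ℝ) + 1) ^ k := by
          calc (n : ℝ) ^ (l' + 1) ≤ ((n : ℝ) + 1) ^ (l' + 1) := by
                apply pow_le_pow_left₀ (by positivity) (by linarith)
            _ ≤ ((n : ℝ) + 1) ^ k := by
                apply pow_le_pow_right₀ (by linarith) (by omega)
        rw [hc]; linarith
      have hjn1 : 0 ≤ jNorm n R α (l' + 1) f := jNorm_nonneg n α hR.le _ f
      have hjk : 0 ≤ jNorm n R α k f := jNorm_nonneg n α hR.le _ f
      calc jNorm n R α l' f ≤ 3 * (n : ℝ) ^ (l' + 1) * R * jNorm n R α (l' + 1) f := h1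
        _ ≤ (c + 1) * R * jNorm n R α (l' + 1) f := by
            apply mul_le_mul_of_nonneg_right _ hjn1
            exact mul_le_mul_of_nonneg_right hcoef hR.le
        _ ≤ (c + 1) * R * ((c + 1) ^ d * R ^ d * jNorm n R α k f) := by
            apply mul_le_mul_of_nonneg_left h2 (by positivity)
        _ = (c + 1) ^ (d + 1) * R ^ (d + 1) * jNorm n R α k f := by ring
  have hd : l + (k - l) = k := by omega
  have := main (k - l) l hd
  refine this.trans ?_
  have hjk : 0 ≤ jNorm n R α k f := jNorm_nonneg n α hR.le _ f
  have hcd : (c + 1) ^ (k - l) ≤ (c + 1) ^ k := pow_le_pow_right₀ hc1 (by omega)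
  have hRd : 0 ≤ R ^ (k - l) := by positivity
  nlinarith [mul_le_mul_of_nonneg_right hcd (mul_nonneg hRd hjk)]
end
end

section
/- Let n ≥ 3 and suppose u ∈ C^{2}(B_R) is a positive radial-value-at-origin solution of Δu = u^{(n+2)/(n−2)} with u > 0 on B_R ⊂ ℝ^n. Then R ≤ n · u(0)^{−2/(n−2)}. (Osserman-type bound: the radius of existence is controlled by the value at the center.) -/
open MeasureTheory Metric

noncomputable section

open Filter Topology Set

/-- 1-D second derivative test (necessary direction): at an interior local max,
the second derivative is nonpositive. -/
lemma aux_secondDerivTest {g g' : ℝ → ℝ} {a : ℝ}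
    (hg : ∀ᶠ t in 𝓝 (0:ℝ), HasDerivAt g (g' t) t)
    (hg' : HasDerivAt g' a 0)
    (hmax : IsLocalMax g 0) : a ≤ 0 := by
  by_contra h
  push_neg at h
  have h0 : g' 0 = 0 := by
    have h1 := hmax.deriv_eq_zero
    rwa [hg.self_of_nhds.deriv] at h1
  have hslope : Tendsto (slope g' 0) (𝓝[≠] (0:ℝ)) (𝓝 a) :=
    hasDerivAt_iff_tendsto_slope.1 hg'
  have h1 : ∀ᶠ t in 𝓝[≠] (0:ℝ), 0 < slope g' 0 t :=
    hslope.eventually (eventually_gt_nhds h)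
  have hpos : ∀ᶠ t in 𝓝[>] (0:ℝ), 0 < g' t := by
    filter_upwards [h1.filter_mono (nhdsWithin_mono 0 (fun t ht => ne_of_gt ht)),
      self_mem_nhdsWithin] with t ht ht0
    have : slope g' 0 t = g' t / t := by
      rw [slope_def_field]; rw [h0]; ring_nf
    rw [this] at ht
    have := mul_pos ht (show (0:ℝ) < t from ht0)
    rwa [div_mul_cancel₀] at this
    exact ne_of_gt ht0
  have hall : ∀ᶠ t in 𝓝[>] (0:ℝ),
      (HasDerivAt g (g' t) t ∧ g t ≤ g 0) ∧ 0 < g' t :=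
    (((hg.and hmax).filter_mono nhdsWithin_le_nhds).and hpos)
  rw [eventually_iff, mem_nhdsGT_iff_exists_Ioc_subset] at hall
  obtain ⟨δ, hδ, hsub⟩ := hall
  have hδ0 : (0:ℝ) < δ := hδ
  have hmono : StrictMonoOn g (Icc 0 δ) := by
    apply strictMonoOn_of_deriv_pos (convex_Icc 0 δ)
    · intro t ht
      rcases eq_or_lt_of_le ht.1 with h'|h'
      · rw [← h']
        exact (hg.self_of_nhds).continuousAt.continuousWithinAt
      · exact ((hsub ⟨h', ht.2⟩).1.1).continuousAt.continuousWithinAt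
    · intro t ht
      rw [interior_Icc] at ht
      have h2 := hsub ⟨ht.1, le_of_lt ht.2⟩
      rw [h2.1.1.deriv]
      exact h2.2
  have hlt : g 0 < g δ := hmono ⟨le_refl 0, le_of_lt hδ0⟩ ⟨le_of_lt hδ0, le_refl δ⟩ hδ0
  exact absurd (hsub ⟨hδ0, le_refl δ⟩).1.2 (not_le_of_gt hlt)

/-- Derivatives of a C² function along a line. -/
lemma aux_dirDeriv {n : ℕ} {S : Set (EuclideanSpace ℝ (Fin n))} (hSopen : IsOpen S)
    {u : EuclideanSpace ℝ (Fin n) → ℝ}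
    (hu : ContDiffOn ℝ 2 u S) {x0 : EuclideanSpace ℝ (Fin n)} (hx0 : x0 ∈ S)
    (e : EuclideanSpace ℝ (Fin n)) :
    (∀ᶠ t in 𝓝 (0:ℝ), HasDerivAt (fun s => u (x0 + s • e)) (fderiv ℝ u (x0 + t • e) e) t)
    ∧ HasDerivAt (fun t : ℝ => fderiv ℝ u (x0 + t • e) e)
        (fderiv ℝ (fderiv ℝ u) x0 e e) 0 := by
  have hL : ∀ t : ℝ, HasDerivAt (fun s : ℝ => x0 + s • e) e t := by
    intro t
    simpa using ((hasDerivAt_id t).smul_const e).const_add x0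
  have hLcont : Continuous (fun s : ℝ => x0 + s • e) :=
    continuous_const.add (continuous_id.smul continuous_const)
  have hL0 : x0 + (0:ℝ) • e = x0 := by simp
  have hmem : ∀ᶠ t in 𝓝 (0:ℝ), x0 + t • e ∈ S := by
    have := hLcont.continuousAt (x := (0:ℝ)) (hSopen.mem_nhds (by simpa [hL0] using hx0))
    exact this
  constructor
  · filter_upwards [hmem] with t ht
    have hdiff : DifferentiableAt ℝ u (x0 + t • e) :=
      (hu.contDiffAt (hSopen.mem_nhds ht)).differentiableAt (by norm_num)
    exact hdiff.hasFDerivAt.comp_hasDerivAt t (hL t)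
  · have hC2 : ContDiffAt ℝ 2 u x0 := hu.contDiffAt (hSopen.mem_nhds hx0)
    have hf' : ContDiffAt ℝ 1 (fderiv ℝ u) x0 := hC2.fderiv_right (by norm_num)
    have hdf : HasFDerivAt (fderiv ℝ u) (fderiv ℝ (fderiv ℝ u) x0) x0 :=
      (hf'.differentiableAt (by norm_num)).hasFDerivAt
    have hdf' : HasFDerivAt (fderiv ℝ u) (fderiv ℝ (fderiv ℝ u) x0) (x0 + (0:ℝ) • e) := by
      rw [hL0]; exact hdf
    have h1 : HasDerivAt (fun t : ℝ => fderiv ℝ u (x0 + t • e))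
        (fderiv ℝ (fderiv ℝ u) x0 e) 0 := hdf'.comp_hasDerivAt 0 (hL 0)
    have h2 := (ContinuousLinearMap.apply ℝ ℝ e).hasFDerivAt.comp_hasDerivAt 0 h1
    exact h2

lemma aux_polyDeriv (K0 b : ℝ) (t : ℝ) :
    HasDerivAt (fun s : ℝ => K0 - 2*b*s - s^2) (-(2*b) - 2*t) t := by
  have h1 := ((hasDerivAt_id t).const_mul (2*b))
  have h2 := hasDerivAt_pow 2 t
  have h3 := ((hasDerivAt_const t K0).sub h1).sub h2
  refine h3.congr_deriv ?_
  simp only [mul_one, pow_one]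
  ring

/-- Derivatives of the barrier function along a line. -/
lemma aux_barrierLine {K0 b c m : ℝ} (hK0 : 0 < K0) :
    (∀ᶠ t in 𝓝 (0:ℝ), HasDerivAt (fun s : ℝ => c * (K0 - 2*b*s - s^2) ^ (-m))
        (c * ((-m) * (K0 - 2*b*t - t^2) ^ (-m-1) * (-(2*b) - 2*t))) t)
    ∧ HasDerivAt (fun t : ℝ => c * ((-m) * (K0 - 2*b*t - t^2) ^ (-m-1) * (-(2*b) - 2*t)))
        (c * ((-m) * (((-m-1) * K0 ^ (-m-2) * (-(2*b))) * (-(2*b)) + K0 ^ (-m-1) * (-2)))) 0 := by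
  have hQcont : Continuous (fun s : ℝ => K0 - 2*b*s - s^2) := by continuity
  have hQ0 : K0 - 2*b*(0:ℝ) - (0:ℝ)^2 = K0 := by norm_num
  have htd : Filter.Tendsto (fun s : ℝ => K0 - 2*b*s - s^2) (𝓝 0) (𝓝 K0) := by
    have := hQcont.tendsto 0
    rwa [show K0 - 2*b*(0:ℝ) - (0:ℝ)^2 = K0 from hQ0] at this
  have hQpos : ∀ᶠ t in 𝓝 (0:ℝ), 0 < K0 - 2*b*t - t^2 :=
    htd.eventually (eventually_gt_nhds hK0)
  constructor
  · filter_upwards [hQpos] with t ht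
    have hr : HasDerivAt (fun y : ℝ => y ^ (-m)) ((-m) * (K0 - 2*b*t - t^2) ^ (-m-1))
        (K0 - 2*b*t - t^2) :=
      Real.hasDerivAt_rpow_const (Or.inl (ne_of_gt ht))
    have := (hr.comp t (aux_polyDeriv K0 b t)).const_mul c
    simpa [Function.comp] using this
  · have hr : HasDerivAt (fun y : ℝ => y ^ (-m-1)) ((-m-1) * K0 ^ (-m-2))
        (K0 - 2*b*(0:ℝ) - (0:ℝ)^2) := by
      rw [hQ0]
      have := Real.hasDerivAt_rpow_const (x := K0) (p := -m-1) (Or.inl (ne_of_gt hK0))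
      convert this using 2
      ring
    have hQ : HasDerivAt (fun s : ℝ => K0 - 2*b*s - s^2) (-(2*b) - 2*(0:ℝ)) 0 :=
      aux_polyDeriv K0 b 0
    have hf1 : HasDerivAt (fun t : ℝ => (K0 - 2*b*t - t^2) ^ (-m-1))
        ((-m-1) * K0 ^ (-m-2) * (-(2*b) - 2*(0:ℝ))) 0 := by
      have := hr.comp 0 hQ
      exact this
    have hf2 : HasDerivAt (fun t : ℝ => -(2*b) - 2*t) (-2) 0 := by
      simpa using ((hasDerivAt_id (0:ℝ)).const_mul 2).const_sub (-(2*b))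
    have hmul := (hf1.mul hf2).const_mul (c * (-m))
    have hfe : (fun t : ℝ => c * ((-m) * (K0 - 2*b*t - t^2) ^ (-m-1) * (-(2*b) - 2*t)))
        = fun t : ℝ => (c * (-m)) * ((K0 - 2*b*t - t^2) ^ (-m-1) * (-(2*b) - 2*t)) := by
      funext t; ring
    rw [hfe]
    refine hmul.congr_deriv ?_
    rw [hQ0]
    ring

lemma aux_sumSq {n : ℕ} (x : EuclideanSpace ℝ (Fin n)) : ∑ i, (x i)^2 = ‖x‖^2 := by
  rw [EuclideanSpace.norm_eq, Real.sq_sqrt (by positivity)]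
  simp [sq_abs]

lemma aux_normLine {n : ℕ} (x : EuclideanSpace ℝ (Fin n)) (i : Fin n) (t : ℝ) :
    ‖x + t • ee i‖^2 = ‖x‖^2 + 2*(x i)*t + t^2 := by
  rw [norm_add_sq_real]
  rw [real_inner_smul_right]
  have h1 : (inner ℝ x (ee i) : ℝ) = x i := by
    simpa [ee] using EuclideanSpace.inner_single_right (𝕜 := ℝ) i 1 x
  rw [h1]
  rw [norm_smul]
  simp [ee]
  ring

lemma aux_algebra (nR ρ K0 S2 : ℝ) (hn : 3 ≤ nR) (hρ : 0 < ρ) (hK0 : 0 < K0)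
    (hS : K0 + S2 = ρ^2) :
    ((nR*(nR-2)*ρ^2)^((nR-2)/4) * (-((nR-2)/2)) * (-((nR-2)/2)-1) * K0^(-((nR-2)/2)-2) * 4) * S2
      + nR * ((nR*(nR-2)*ρ^2)^((nR-2)/4) * (-((nR-2)/2)) * K0^(-((nR-2)/2)-1) * (-2))
    = ((nR*(nR-2)*ρ^2)^((nR-2)/4) * K0^(-((nR-2)/2)))^((nR+2)/(nR-2)) := by
  set m : ℝ := (nR-2)/2 with hm
  set q : ℝ := (nR-2)/4 with hq
  set p : ℝ := (nR+2)/(nR-2) with hp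
  set D : ℝ := nR*(nR-2)*ρ^2 with hD
  have hn2 : (0:ℝ) < nR - 2 := by linarith
  have hDpos : 0 < D := by
    have : (0:ℝ) < nR := by linarith
    positivity
  have hcpos : 0 < D ^ q := Real.rpow_pos_of_pos hDpos q
  have e1 : K0 ^ (-m-1) = K0 ^ (-m-2) * K0 := by
    rw [show (-m-1 : ℝ) = (-m-2)+1 by ring, Real.rpow_add_one hK0.ne']
  have e2 : (D^q * K0 ^ (-m))^p = (D^q * D) * K0^(-m-2) := by
    rw [Real.mul_rpow hcpos.le (Real.rpow_nonneg hK0.le _)]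
    rw [← Real.rpow_mul hDpos.le, ← Real.rpow_mul hK0.le]
    have hqp : q * p = q + 1 := by
      rw [hq, hp]; field_simp; ring
    have hmp : (-m) * p = -m-2 := by
      rw [hm, hp]; field_simp; ring
    rw [hqp, hmp, Real.rpow_add_one hDpos.ne']
  rw [e1, e2]
  have hS2' : S2 = ρ^2 - K0 := by linarith
  rw [hS2', hD]
  ring

set_option maxHeartbeats 1000000 in
theorem stmt_18 (n : ℕ) (hn : 3 ≤ n) (R : ℝ) (hR : 0 < R)
    (u : EuclideanSpace ℝ (Fin n) → ℝ)
    (hu : ContDiffOn ℝ 2 u (ball (0 : EuclideanSpace ℝ (Fin n)) R))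
    (hpos : ∀ x ∈ ball (0 : EuclideanSpace ℝ (Fin n)) R, 0 < u x)
    (heq : ∀ x ∈ ball (0 : EuclideanSpace ℝ (Fin n)) R,
      (∑ i : Fin n,
          iteratedFDerivWithin ℝ 2 u (ball (0 : EuclideanSpace ℝ (Fin n)) R) x
            (fun _ => ee i))
        = u x ^ (((n : ℝ) + 2) / ((n : ℝ) - 2))) :
    R ≤ n * u 0 ^ (-(2 : ℝ) / ((n : ℝ) - 2)) := by
  classical
  set S := ball (0 : EuclideanSpace ℝ (Fin n)) R with hSdef
  have hSopen : IsOpen S := isOpen_ball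
  have hn3 : (3:ℝ) ≤ (n:ℝ) := by exact_mod_cast hn
  have hn2 : (0:ℝ) < (n:ℝ) - 2 := by linarith
  have hnpos : (0:ℝ) < (n:ℝ) := by linarith
  have h0S : (0 : EuclideanSpace ℝ (Fin n)) ∈ S := mem_ball_self hR
  have ha : 0 < u 0 := hpos 0 h0S
  have hppos : 0 < ((n:ℝ)+2)/((n:ℝ)-2) := div_pos (by linarith) hn2
  -- Key estimate: for each interior radius ρ, u 0 is bounded by the barrier value at 0.
  have key : ∀ ρ : ℝ, 0 < ρ → ρ < R →
      u 0 ≤ ((n:ℝ)*((n:ℝ)-2)*ρ^2) ^ (((n:ℝ)-2)/4) * (ρ^2) ^ (-(((n:ℝ)-2)/2)) := by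
    intro ρ hρ0 hρR
    set m : ℝ := ((n:ℝ)-2)/2 with hmdef
    set c : ℝ := ((n:ℝ)*((n:ℝ)-2)*ρ^2) ^ (((n:ℝ)-2)/4) with hcdef
    have hcpos : 0 < c := Real.rpow_pos_of_pos (by positivity) _
    set w : EuclideanSpace ℝ (Fin n) → ℝ := fun x => c * (ρ^2 - ‖x‖^2) ^ (-m) with hwdef
    have hsub1 : closedBall (0:EuclideanSpace ℝ (Fin n)) ρ ⊆ S := closedBall_subset_ball hρR
    obtain ⟨zM, hzM, hzMax⟩ := (isCompact_closedBall (0:EuclideanSpace ℝ (Fin n)) ρ).exists_isMaxOn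
      ⟨0, mem_closedBall_self hρ0.le⟩ ((hu.continuousOn).mono hsub1)
    set Mv := u zM with hMdef
    have hMpos : 0 < Mv := hpos zM (hsub1 hzM)
    set ε : ℝ := min ((c/Mv) ^ ((2:ℝ)/((n:ℝ)-2))) (ρ^2/2) with hεdef
    have hεpos : 0 < ε := lt_min (Real.rpow_pos_of_pos (div_pos hcpos hMpos) _) (by positivity)
    have hερ : ε ≤ ρ^2/2 := min_le_right _ _
    have hεc : ε ≤ (c/Mv) ^ ((2:ℝ)/((n:ℝ)-2)) := min_le_left _ _
    set ρ' : ℝ := Real.sqrt (ρ^2 - ε) with hρ'def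
    have hρε : 0 < ρ^2 - ε := by nlinarith
    have hρ'sq : ρ'^2 = ρ^2 - ε := Real.sq_sqrt hρε.le
    have hρ'pos : 0 < ρ' := Real.sqrt_pos.mpr hρε
    have hρ'lt : ρ' < ρ := by nlinarith [Real.sqrt_nonneg (ρ^2-ε)]
    set cb := closedBall (0:EuclideanSpace ℝ (Fin n)) ρ' with hcbdef
    have hcbsub : cb ⊆ closedBall (0:EuclideanSpace ℝ (Fin n)) ρ :=
      closedBall_subset_closedBall hρ'lt.le
    have hcbS : cb ⊆ S := hcbsub.trans hsub1
    have hKlb : ∀ x ∈ cb, ε ≤ ρ^2 - ‖x‖^2 := by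
      intro x hx
      have hx' : ‖x‖ ≤ ρ' := by simpa [hcbdef, mem_closedBall, dist_zero_right] using hx
      have h2 : ‖x‖^2 ≤ ρ'^2 := pow_le_pow_left₀ (norm_nonneg x) hx' 2
      nlinarith
    have hwcont : ContinuousOn w cb := by
      apply continuousOn_const.mul
      apply ContinuousOn.rpow_const
      · exact continuousOn_const.sub ((continuous_norm.pow 2).continuousOn)
      · intro x hx
        exact Or.inl (ne_of_gt (lt_of_lt_of_le hεpos (hKlb x hx)))
    obtain ⟨x0, hx0cb, hx0max⟩ :=
      (isCompact_closedBall (0:EuclideanSpace ℝ (Fin n)) ρ').exists_isMaxOn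
        ⟨0, mem_closedBall_self hρ'pos.le⟩ (((hu.continuousOn).mono hcbS).sub hwcont)
    by_cases hle : u x0 ≤ w x0
    · have h0cb : (0:EuclideanSpace ℝ (Fin n)) ∈ cb := mem_closedBall_self hρ'pos.le
      have h3 : u 0 - w 0 ≤ u x0 - w x0 := hx0max h0cb
      calc u 0 ≤ w 0 := by linarith
        _ = c * (ρ^2) ^ (-m) := by simp [hwdef]
    · exfalso
      push_neg at hle
      have hux0M : u x0 ≤ Mv := hzMax (hcbsub hx0cb)
      have hx0le : ‖x0‖ ≤ ρ' := by simpa [hcbdef, mem_closedBall, dist_zero_right] using hx0cb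
      have hx0lt : ‖x0‖ < ρ' := by
        rcases lt_or_eq_of_le hx0le with h|h
        · exact h
        · exfalso
          have hKx0 : ρ^2 - ‖x0‖^2 = ε := by
            rw [h]; linarith [hρ'sq]
          have hm0 : (0:ℝ) ≤ m := by rw [hmdef]; positivity
          have hεm : ε ^ m ≤ c / Mv := by
            have h1 : ε ^ m ≤ ((c/Mv) ^ ((2:ℝ)/((n:ℝ)-2))) ^ m :=
              Real.rpow_le_rpow hεpos.le hεc hm0
            rwa [← Real.rpow_mul (by positivity),
              show (2:ℝ)/((n:ℝ)-2) * m = 1 by rw [hmdef]; field_simp,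
              Real.rpow_one] at h1
          have hεmpos : 0 < ε ^ m := Real.rpow_pos_of_pos hεpos m
          have hMc : Mv * ε ^ m ≤ c := by
            have := (le_div_iff₀ hMpos).1 hεm
            linarith [this]
          have hwx0 : Mv ≤ w x0 := by
            have hwx0' : w x0 = c / ε ^ m := by
              simp only [hwdef, hKx0]
              rw [Real.rpow_neg hεpos.le, div_eq_mul_inv]
            rw [hwx0']
            rw [le_div_iff₀ hεmpos]
            exact hMc
          linarith
      have hx0S : x0 ∈ S := hcbS hx0cb
      set K0 : ℝ := ρ^2 - ‖x0‖^2 with hK0def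
      have hK0pos : 0 < K0 := lt_of_lt_of_le hεpos (hKlb x0 hx0cb)
      have hx0ball : x0 ∈ ball (0:EuclideanSpace ℝ (Fin n)) ρ' := by
        simpa [mem_ball, dist_zero_right] using hx0lt
      have hlm : IsLocalMax (fun x => u x - w x) x0 :=
        hx0max.isLocalMax (Filter.mem_of_superset (isOpen_ball.mem_nhds hx0ball)
          ball_subset_closedBall)
      -- per-direction second derivative comparison
      have hwx0val : w x0 = c * K0 ^ (-m) := by simp [hwdef, hK0def]
      have hdir : ∀ i : Fin n, fderiv ℝ (fderiv ℝ u) x0 (ee i) (ee i) ≤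
          c * ((-m) * (((-m-1) * K0 ^ (-m-2) * (-(2*(x0 i)))) * (-(2*(x0 i)))
            + K0 ^ (-m-1) * (-2))) := by
        intro i
        obtain ⟨hu_ev, hu_d⟩ := aux_dirDeriv hSopen hu hx0S (ee i)
        obtain ⟨hw_ev, hw_d⟩ := aux_barrierLine (K0 := K0) (b := x0 i) (c := c) (m := m) hK0pos
        have hL0 : x0 + (0:ℝ) • ee i = x0 := by simp
        have hnorm : ∀ t : ℝ, ρ^2 - ‖x0 + t • ee i‖^2 = K0 - 2*(x0 i)*t - t^2 := by
          intro t
          rw [aux_normLine x0 i t, hK0def]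
          ring
        have hgmax : IsLocalMax
            (fun t : ℝ => u (x0 + t • ee i) - c * (K0 - 2*(x0 i)*t - t^2) ^ (-m)) 0 := by
          have hLc : Continuous (fun t : ℝ => x0 + t • ee i) :=
            continuous_const.add (continuous_id.smul continuous_const)
          have htd : Filter.Tendsto (fun t : ℝ => x0 + t • ee i) (𝓝 0) (𝓝 x0) := by
            have h2 := hLc.tendsto 0
            rwa [hL0] at h2
          have hev := htd.eventually hlm
          have hg0 : u (x0 + (0:ℝ) • ee i) - c * (K0 - 2*(x0 i)*0 - 0^2) ^ (-m)
              = u x0 - w x0 := by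
            rw [hL0, hwx0val]
            norm_num
          filter_upwards [hev] with t ht
          rw [show c * (K0 - 2*(x0 i)*0 - 0^2) ^ (-m) = w x0 by
              rw [hwx0val]; norm_num, hL0]
          calc u (x0 + t • ee i) - c * (K0 - 2*(x0 i)*t - t^2) ^ (-m)
              = u (x0 + t • ee i) - w (x0 + t • ee i) := by
                rw [hwdef]; simp only; rw [hnorm t]
            _ ≤ u x0 - w x0 := ht
        have hsub := aux_secondDerivTest
          (g := fun t : ℝ => u (x0 + t • ee i) - c * (K0 - 2*(x0 i)*t - t^2) ^ (-m))
          (g' := fun t : ℝ => fderiv ℝ u (x0 + t • ee i) (ee i)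
            - c * ((-m) * (K0 - 2*(x0 i)*t - t^2) ^ (-m-1) * (-(2*(x0 i)) - 2*t)))
          (by filter_upwards [hu_ev, hw_ev] with t h1 h2; exact h1.sub h2)
          (hu_d.sub hw_d) hgmax
        linarith [hsub]
      -- sum over directions
      have hbridge : ∀ i : Fin n,
          iteratedFDerivWithin ℝ 2 u S x0 (fun _ => ee i)
            = fderiv ℝ (fderiv ℝ u) x0 (ee i) (ee i) := by
        intro i
        rw [iteratedFDerivWithin_two_apply u hSopen.uniqueDiffOn hx0S]
        have h1 : ∀ y ∈ S, fderivWithin ℝ u S y = fderiv ℝ u y :=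
          fun y hy => fderivWithin_of_isOpen hSopen hy
        have h2 : fderivWithin ℝ (fderivWithin ℝ u S) S x0
            = fderivWithin ℝ (fderiv ℝ u) S x0 :=
          fderivWithin_congr h1 (h1 x0 hx0S)
        rw [h2, fderivWithin_of_isOpen hSopen hx0S]
      have hBsum : (∑ i : Fin n, c * ((-m) * (((-m-1) * K0 ^ (-m-2) * (-(2*(x0 i))))
            * (-(2*(x0 i))) + K0 ^ (-m-1) * (-2))))
          = (c * (-m) * (-m-1) * K0^(-m-2) * 4) * (∑ i : Fin n, (x0 i)^2)
            + (n:ℝ) * (c * (-m) * K0^(-m-1) * (-2)) := by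
        rw [Finset.sum_congr rfl (fun i _ => show
          c * ((-m) * (((-m-1) * K0 ^ (-m-2) * (-(2*(x0 i)))) * (-(2*(x0 i)))
            + K0 ^ (-m-1) * (-2)))
          = (c * (-m) * (-m-1) * K0^(-m-2) * 4) * (x0 i)^2
            + (c * (-m) * K0^(-m-1) * (-2)) from by ring)]
        rw [Finset.sum_add_distrib, ← Finset.mul_sum, Finset.sum_const, Finset.card_univ,
          Fintype.card_fin, nsmul_eq_mul]
      have hSx0 : K0 + ‖x0‖^2 = ρ^2 := by rw [hK0def]; ring
      have halg := aux_algebra (n:ℝ) ρ K0 (‖x0‖^2) hn3 hρ0 hK0pos hSx0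
      have hsum : u x0 ^ (((n:ℝ)+2)/((n:ℝ)-2)) ≤ (w x0) ^ (((n:ℝ)+2)/((n:ℝ)-2)) := by
        have h1 := heq x0 hx0S
        have h2 : (∑ i : Fin n, iteratedFDerivWithin ℝ 2 u S x0 (fun _ => ee i))
            ≤ ∑ i : Fin n, c * ((-m) * (((-m-1) * K0 ^ (-m-2) * (-(2*(x0 i))))
              * (-(2*(x0 i))) + K0 ^ (-m-1) * (-2))) := by
          apply Finset.sum_le_sum
          intro i _
          rw [hbridge i]
          exact hdir i
        rw [h1] at h2
        rw [hwx0val]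
        calc u x0 ^ (((n:ℝ)+2)/((n:ℝ)-2)) ≤ _ := h2
          _ = (c * K0 ^ (-m)) ^ (((n:ℝ)+2)/((n:ℝ)-2)) := by
            rw [hBsum, aux_sumSq x0]
            rw [hcdef, hmdef]
            exact halg
      have hwpos : 0 < w x0 := by
        rw [hwx0val]
        positivity
      have hlt2 : (w x0) ^ (((n:ℝ)+2)/((n:ℝ)-2)) < u x0 ^ (((n:ℝ)+2)/((n:ℝ)-2)) :=
        Real.rpow_lt_rpow hwpos.le hle hppos
      linarith
  -- conclude from the key estimate
  by_contra hcon
  push_neg at hcon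
  set C : ℝ := (n:ℝ) * u 0 ^ (-(2:ℝ)/((n:ℝ)-2)) with hCdef
  have hCpos : 0 < C := mul_pos hnpos (Real.rpow_pos_of_pos ha _)
  set ρ : ℝ := (C + R)/2 with hρdef
  have hρ0 : 0 < ρ := by rw [hρdef]; linarith
  have hρR : ρ < R := by rw [hρdef]; linarith
  have hCρ : C < ρ := by rw [hρdef]; linarith
  have hk := key ρ hρ0 hρR
  set q : ℝ := ((n:ℝ)-2)/4 with hqdef
  have hq0 : 0 < q := by rw [hqdef]; linarith
  have hρ2 : (0:ℝ) < ρ^2 := by positivity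
  have hnn2 : (0:ℝ) < (n:ℝ)*((n:ℝ)-2) := by positivity
  -- rewrite RHS as ((n(n-2))/ρ²)^q
  have hXpos : (0:ℝ) < (n:ℝ)*((n:ℝ)-2)/ρ^2 := by positivity
  have hrhs : ((n:ℝ)*((n:ℝ)-2)*ρ^2) ^ q * (ρ^2) ^ (-(((n:ℝ)-2)/2))
      = ((n:ℝ)*((n:ℝ)-2)/ρ^2) ^ q := by
    have h1 : (ρ^2:ℝ)^q * (ρ^2) ^ (-(((n:ℝ)-2)/2)) = ((ρ^2:ℝ)^q)⁻¹ := by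
      rw [← Real.rpow_add hρ2, ← Real.rpow_neg hρ2.le q]
      congr 1
      rw [hqdef]; ring
    rw [Real.mul_rpow hnn2.le hρ2.le, Real.div_rpow hnn2.le hρ2.le, mul_assoc, h1,
      div_eq_mul_inv]
  rw [hrhs] at hk
  -- raise to power 1/q
  have hk2 : u 0 ^ ((1:ℝ)/q) ≤ (n:ℝ)*((n:ℝ)-2)/ρ^2 := by
    have h1 : u 0 ^ ((1:ℝ)/q) ≤ (((n:ℝ)*((n:ℝ)-2)/ρ^2) ^ q) ^ ((1:ℝ)/q) :=
      Real.rpow_le_rpow ha.le hk (by positivity)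
    rwa [← Real.rpow_mul hXpos.le, mul_one_div, div_self hq0.ne', Real.rpow_one] at h1
  have hupos : 0 < u 0 ^ ((1:ℝ)/q) := Real.rpow_pos_of_pos ha _
  have hρ2le : ρ^2 ≤ (n:ℝ)*((n:ℝ)-2) * (u 0 ^ (-(2:ℝ)/((n:ℝ)-2)))^2 := by
    have h1 : ρ^2 * u 0 ^ ((1:ℝ)/q) ≤ (n:ℝ)*((n:ℝ)-2) := by
      have := mul_le_mul_of_nonneg_left hk2 hρ2.le
      rwa [mul_div_cancel₀ _ hρ2.ne'] at this
    have h2 : (u 0 ^ (-(2:ℝ)/((n:ℝ)-2)))^2 = (u 0 ^ ((1:ℝ)/q))⁻¹ := by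
      rw [← Real.rpow_natCast (u 0 ^ (-(2:ℝ)/((n:ℝ)-2))) 2, ← Real.rpow_mul ha.le,
        ← Real.rpow_neg_one (u 0 ^ ((1:ℝ)/q)), ← Real.rpow_mul ha.le]
      congr 1
      rw [hqdef]
      push_cast
      field_simp
      norm_num
    rw [h2, ← div_eq_mul_inv, le_div_iff₀ hupos]
    linarith
  have hCsq : ρ^2 ≤ C^2 := by
    have hu2 : (0:ℝ) ≤ (u 0 ^ (-(2:ℝ)/((n:ℝ)-2)))^2 := sq_nonneg _
    have h3 : (n:ℝ)*((n:ℝ)-2) ≤ (n:ℝ)*(n:ℝ) := by nlinarith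
    have h4 : (n:ℝ)*((n:ℝ)-2) * (u 0 ^ (-(2:ℝ)/((n:ℝ)-2)))^2
        ≤ (n:ℝ)*(n:ℝ) * (u 0 ^ (-(2:ℝ)/((n:ℝ)-2)))^2 :=
      mul_le_mul_of_nonneg_right h3 hu2
    have h5 : C^2 = (n:ℝ)*(n:ℝ) * (u 0 ^ (-(2:ℝ)/((n:ℝ)-2)))^2 := by rw [hCdef]; ring
    linarith
  have : ρ ≤ C := by
    have := (pow_le_pow_iff_left₀ hρ0.le hCpos.le (two_ne_zero)).1
    exact this hCsq
  linarith
end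
end
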